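/- arXiv:1809.05830 — 2 statements merged into one kernel-verified Lean document; each statement's English description precedes it below -/
import Mathlib

section
/- For every real number x and angle θ, the Jacobi–Anger expansion holds: e^{i x cos θ} = J₀(x) + Σ_{s ∈ ℤ, s ≠ 0} iˢ J_s(x) e^{i s θ}, where J_s denotes the Bessel function of the first kind of integer order s, and the series converges absolutely. -/
open Complex

/-- Bessel function of the first kind of nonnegative integer order. -/
noncomputable def Jnat (n : ℕ) (x : ℝ) : ℝ :=
  ∑' m : ℕ, ((-1 : ℝ) ^ m / (m.factorial * (m + n).factorial)) * (x / 2) ^ (2 * m + n)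

/-- Bessel function of the first kind of integer order, with `J_{-s} = (-1)^s J_s`. -/
noncomputable def J (s : ℤ) (x : ℝ) : ℝ :=
  if 0 ≤ s then Jnat s.toNat x else (-1 : ℝ) ^ (-s).toNat * Jnat (-s).toNat x

namespace JacobiAngerAux

/-- summand of `Jnat` -/
noncomputable def bes (n : ℕ) (x : ℝ) (m : ℕ) : ℝ :=
  ((-1 : ℝ) ^ m / (m.factorial * (m + n).factorial)) * (x / 2) ^ (2 * m + n)

lemma Jnat_eq (n : ℕ) (x : ℝ) : Jnat n x = ∑' m : ℕ, bes n x m := rfl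

lemma summable_bes (k : ℕ) (x : ℝ) : Summable (bes k x) := by
  have h : Summable (fun m : ℕ => ((x / 2) ^ 2) ^ m / m.factorial * |x / 2| ^ k) :=
    (Real.summable_pow_div_factorial ((x / 2) ^ 2)).mul_right _
  refine Summable.of_norm (h.of_nonneg_of_le (fun m => norm_nonneg _) fun m => ?_)
  have h1 : (0 : ℝ) < m.factorial := by positivity
  have h2 : (0 : ℝ) < (m + k).factorial := by positivity
  have habs : ‖bes k x m‖ = |x / 2| ^ (2 * m + k) / ((m.factorial : ℝ) * (m + k).factorial) := by
    rw [bes, Real.norm_eq_abs, abs_mul, abs_div, _root_.abs_pow, _root_.abs_pow, abs_neg,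
      abs_one, one_pow, abs_of_pos (by positivity)]
    ring
  rw [habs]
  calc |x / 2| ^ (2 * m + k) / ((m.factorial : ℝ) * (m + k).factorial)
      ≤ |x / 2| ^ (2 * m + k) / (m.factorial : ℝ) := by
        apply div_le_div_of_nonneg_left (by positivity) h1
        have hk : (1 : ℝ) ≤ ((m + k).factorial : ℝ) := by
          exact_mod_cast Nat.one_le_iff_ne_zero.mpr (Nat.factorial_ne_zero (m + k))
        nlinarith
    _ = ((x / 2) ^ 2) ^ m / m.factorial * |x / 2| ^ k := by
        rw [pow_add, pow_mul, _root_.sq_abs]; ring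

lemma hasSum_bes (k : ℕ) (x : ℝ) : HasSum (bes k x) (Jnat k x) := by
  rw [Jnat_eq]; exact (summable_bes k x).hasSum

lemma summable_norm_pow_div_factorial (z : ℂ) :
    Summable fun k : ℕ => ‖z ^ k / (k.factorial : ℂ)‖ :=
  (Real.summable_pow_div_factorial ‖z‖).congr fun k => by
    rw [norm_div, norm_pow, Complex.norm_natCast]

lemma hasSum_expc (z : ℂ) : HasSum (fun k : ℕ => z ^ k / (k.factorial : ℂ)) (Complex.exp z) := by
  have h : Summable fun k : ℕ => z ^ k / (k.factorial : ℂ) :=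
    (summable_norm_pow_div_factorial z).of_norm
  have := h.hasSum
  rwa [show (∑' k : ℕ, z ^ k / (k.factorial : ℂ)) = Complex.exp z by
    rw [Complex.exp_eq_exp_ℂ, NormedSpace.exp_eq_tsum_div]] at this

/-- the bijection `ℤ × ℕ ≃ ℕ × ℕ` along fibers of `k - m`. -/
def eZN : ℤ × ℕ ≃ ℕ × ℕ where
  toFun p := (p.2 + p.1.toNat, p.2 + (-p.1).toNat)
  invFun q := ((q.1 : ℤ) - q.2, min q.1 q.2)
  left_inv p := by
    obtain ⟨n, m⟩ := p
    simp only [Prod.mk.injEq]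
    constructor <;> omega
  right_inv q := by
    obtain ⟨a, b⟩ := q
    simp only [Prod.mk.injEq]
    constructor <;> omega

noncomputable def tt (θ : ℝ) : ℂ := Complex.I * Complex.exp (Complex.I * θ)

lemma tt_ne_zero (θ : ℝ) : tt θ ≠ 0 :=
  mul_ne_zero Complex.I_ne_zero (Complex.exp_ne_zero _)

noncomputable def uu (x θ : ℝ) (k : ℕ) : ℂ := ((x : ℂ) / 2 * tt θ) ^ k / (k.factorial : ℂ)

noncomputable def vv (x θ : ℝ) (m : ℕ) : ℂ := (-(x : ℂ) / 2 * (tt θ)⁻¹) ^ m / (m.factorial : ℂ)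

noncomputable def ff (x θ : ℝ) (p : ℕ × ℕ) : ℂ := uu x θ p.1 * vv x θ p.2

lemma summable_norm_uu (x θ : ℝ) : Summable fun k => ‖uu x θ k‖ :=
  (summable_norm_pow_div_factorial _).congr fun k => by rw [uu]

lemma summable_norm_vv (x θ : ℝ) : Summable fun m => ‖vv x θ m‖ :=
  (summable_norm_pow_div_factorial _).congr fun m => by rw [vv]

lemma summable_norm_ff (x θ : ℝ) : Summable fun p => ‖ff x θ p‖ :=
  (summable_norm_uu x θ).mul_norm (summable_norm_vv x θ)

lemma fiber_eq (x θ : ℝ) (n : ℤ) (m : ℕ) :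
    ff x θ (eZN (n, m)) =
      ((bes n.natAbs x m : ℝ) : ℂ) * ((-1 : ℂ) ^ (-n).toNat * tt θ ^ n) := by
  have htne := tt_ne_zero θ
  have hfac1 : ((m.factorial : ℂ)) ≠ 0 := Nat.cast_ne_zero.mpr (Nat.factorial_ne_zero _)
  rcases le_or_gt 0 n with hn | hn
  · have h1 : (-n).toNat = 0 := by omega
    have h2 : n.toNat = n.natAbs := by omega
    have h3 : tt θ ^ n = tt θ ^ n.natAbs := by
      rw [← zpow_natCast]
      congr 1
      omega
    have he : eZN (n, m) = (m + n.natAbs, m) := by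
      show (m + n.toNat, m + (-n).toNat) = _
      rw [h1, h2]
      simp
    rw [he, h1, h3, pow_zero, one_mul]
    show uu x θ (m + n.natAbs) * vv x θ m = _
    have hfac2 : (((m + n.natAbs).factorial : ℂ)) ≠ 0 :=
      Nat.cast_ne_zero.mpr (Nat.factorial_ne_zero _)
    rw [uu, vv, bes]
    push_cast
    have hneg : (-(x : ℂ) / 2 * (tt θ)⁻¹) ^ m
        = (-1 : ℂ) ^ m * ((x : ℂ) / 2) ^ m * ((tt θ) ^ m)⁻¹ := by
      rw [show -(x : ℂ) / 2 * (tt θ)⁻¹ = (-1) * ((x : ℂ) / 2 * (tt θ)⁻¹) by ring,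
        mul_pow, mul_pow, inv_pow]; ring
    rw [hneg, mul_pow]
    have htm : (tt θ) ^ m ≠ 0 := pow_ne_zero _ htne
    field_simp
    ring
  · have p := (-n).toNat
    have h1 : n.toNat = 0 := by omega
    have h2 : (-n).toNat = n.natAbs := by omega
    have h3 : tt θ ^ n = (tt θ ^ n.natAbs)⁻¹ := by
      rw [← zpow_natCast, ← zpow_neg]
      congr 1
      omega
    have he : eZN (n, m) = (m, m + n.natAbs) := by
      show (m + n.toNat, m + (-n).toNat) = _
      rw [h1, h2]
      simp
    rw [he, h2, h3]
    show uu x θ m * vv x θ (m + n.natAbs) = _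
    have hfac2 : (((m + n.natAbs).factorial : ℂ)) ≠ 0 :=
      Nat.cast_ne_zero.mpr (Nat.factorial_ne_zero _)
    rw [uu, vv, bes]
    push_cast
    have hneg : (-(x : ℂ) / 2 * (tt θ)⁻¹) ^ (m + n.natAbs)
        = (-1 : ℂ) ^ (m + n.natAbs) * ((x : ℂ) / 2) ^ (m + n.natAbs)
          * ((tt θ) ^ (m + n.natAbs))⁻¹ := by
      rw [show -(x : ℂ) / 2 * (tt θ)⁻¹ = (-1) * ((x : ℂ) / 2 * (tt θ)⁻¹) by ring,
        mul_pow, mul_pow, inv_pow]; ring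
    rw [hneg, mul_pow]
    have htm : (tt θ) ^ (m + n.natAbs) ≠ 0 := pow_ne_zero _ htne
    have htk : (tt θ) ^ n.natAbs ≠ 0 := pow_ne_zero _ htne
    field_simp
    ring

lemma fiber_hasSum (x θ : ℝ) (n : ℤ) :
    HasSum (fun m => ff x θ (eZN (n, m))) (((J n x : ℝ) : ℂ) * tt θ ^ n) := by
  have h := (Complex.hasSum_ofReal.mpr (hasSum_bes n.natAbs x)).mul_right
    ((-1 : ℂ) ^ (-n).toNat * tt θ ^ n)
  have hval : ((J n x : ℝ) : ℂ) * tt θ ^ n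
      = ((Jnat n.natAbs x : ℝ) : ℂ) * ((-1 : ℂ) ^ (-n).toNat * tt θ ^ n) := by
    rcases le_or_gt 0 n with hn | hn
    · rw [J, if_pos hn, show (-n).toNat = 0 by omega, show n.toNat = n.natAbs by omega,
        pow_zero, one_mul]
    · rw [J, if_neg (by omega), show (-n).toNat = n.natAbs by omega]
      push_cast
      ring
  have hfun : (fun m => ff x θ (eZN (n, m)))
      = fun m => ((bes n.natAbs x m : ℝ) : ℂ) * ((-1 : ℂ) ^ (-n).toNat * tt θ ^ n) :=
    funext (fiber_eq x θ n)
  rw [hfun, hval]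
  exact h

end JacobiAngerAux

open JacobiAngerAux in
/-- Jacobi–Anger expansion: `e^{i x cos θ} = J₀(x) + ∑_{s ≠ 0} iˢ J_s(x) e^{i s θ}`,
with absolute convergence of the series over nonzero integers. -/
theorem jacobi_anger (x θ : ℝ) :
    Summable (fun s : {s : ℤ // s ≠ 0} =>
      ‖Complex.I ^ (s : ℤ) * (J s x : ℂ) *
        Complex.exp (Complex.I * ((s : ℤ) : ℂ) * (θ : ℂ))‖) ∧
    Complex.exp (Complex.I * (x : ℂ) * ((Real.cos θ : ℝ) : ℂ)) =
      (J 0 x : ℂ) + ∑' s : {s : ℤ // s ≠ 0},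
        Complex.I ^ (s : ℤ) * (J s x : ℂ) *
          Complex.exp (Complex.I * ((s : ℤ) : ℂ) * (θ : ℂ)) := by
  classical
  set S : ℂ := Complex.exp (Complex.I * (x : ℂ) * ((Real.cos θ : ℝ) : ℂ)) with hS
  -- sum of the double series
  have hfs : HasSum (ff x θ) S := by
    have hsum : Summable (ff x θ) := (summable_norm_ff x θ).of_norm
    have e1 : (∑' p : ℕ × ℕ, ff x θ p)
        = (∑' k : ℕ, uu x θ k) * (∑' m : ℕ, vv x θ m) :=
      (tsum_mul_tsum_of_summable_norm (summable_norm_uu x θ) (summable_norm_vv x θ)).symm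
    have e2 : (∑' k : ℕ, uu x θ k) = Complex.exp ((x : ℂ) / 2 * tt θ) := (hasSum_expc _).tsum_eq
    have e3 : (∑' m : ℕ, vv x θ m) = Complex.exp (-(x : ℂ) / 2 * (tt θ)⁻¹) :=
      (hasSum_expc _).tsum_eq
    have e4 : Complex.exp ((x : ℂ) / 2 * tt θ) * Complex.exp (-(x : ℂ) / 2 * (tt θ)⁻¹) = S := by
      rw [← Complex.exp_add, hS]
      congr 1
      have hE : Complex.exp (Complex.I * θ) ≠ 0 := Complex.exp_ne_zero _
      have hcos : ((Real.cos θ : ℝ) : ℂ)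
          = (Complex.exp (Complex.I * θ) + (Complex.exp (Complex.I * θ))⁻¹) / 2 := by
        rw [Complex.ofReal_cos, Complex.cos, ← Complex.exp_neg]
        ring_nf
      rw [hcos, tt, mul_inv, Complex.inv_I]
      field_simp
    have := hsum.hasSum
    rwa [e1, e2, e3, e4] at this
  -- regroup along fibers
  have hG : HasSum (fun n : ℤ => ((J n x : ℝ) : ℂ) * tt θ ^ n) S :=
    HasSum.prod_fiberwise ((eZN.hasSum_iff).2 hfs) (fiber_hasSum x θ)
  -- rewrite the general term
  have hterm : ∀ n : ℤ, ((J n x : ℝ) : ℂ) * tt θ ^ n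
      = Complex.I ^ n * (J n x : ℂ) * Complex.exp (Complex.I * (n : ℂ) * (θ : ℂ)) := by
    intro n
    have hexp : Complex.exp (Complex.I * (n : ℂ) * (θ : ℂ))
        = Complex.exp (Complex.I * θ) ^ n := by
      rw [← Complex.exp_int_mul]
      congr 1
      ring
    rw [hexp, tt, mul_zpow]
    ring
  have hGF : HasSum (fun n : ℤ =>
      Complex.I ^ n * (J n x : ℂ) * Complex.exp (Complex.I * (n : ℂ) * (θ : ℂ))) S := by
    rwa [show (fun n : ℤ => Complex.I ^ n * (J n x : ℂ)
      * Complex.exp (Complex.I * (n : ℂ) * (θ : ℂ)))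
      = fun n : ℤ => ((J n x : ℝ) : ℂ) * tt θ ^ n from funext fun n => (hterm n).symm]
  -- norm summability over ℤ
  have hfn' : Summable ((fun p => ‖ff x θ p‖) ∘ eZN) := (eZN.summable_iff).2 (summable_norm_ff x θ)
  have hNorm : Summable (fun n : ℤ => ∑' m : ℕ, ‖ff x θ (eZN (n, m))‖) :=
    (HasSum.prod_fiberwise hfn'.hasSum (fun n => (hfn'.prod_factor n).hasSum)).summable
  have hGnorm : Summable (fun n : ℤ => ‖((J n x : ℝ) : ℂ) * tt θ ^ n‖) := by
    refine Summable.of_nonneg_of_le (fun n => norm_nonneg _) (fun n => ?_) hNorm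
    rw [← (fiber_hasSum x θ n).tsum_eq]
    exact norm_tsum_le_tsum_norm (hfn'.prod_factor n)
  have hFnorm : Summable (fun n : ℤ => ‖Complex.I ^ n * (J n x : ℂ)
      * Complex.exp (Complex.I * (n : ℂ) * (θ : ℂ))‖) := by
    refine hGnorm.congr fun n => ?_
    rw [hterm n]
  constructor
  · exact hFnorm.subtype {s : ℤ | s ≠ 0}
  · have hsum := hGF.summable
    have h1 : (∑' s : (({0} : Set ℤ)),
        Complex.I ^ (s : ℤ) * (J s x : ℂ) * Complex.exp (Complex.I * ((s : ℤ) : ℂ) * (θ : ℂ)))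
        = (J 0 x : ℂ) := by
      rw [tsum_singleton (0 : ℤ) (fun n : ℤ =>
        Complex.I ^ n * (J n x : ℂ) * Complex.exp (Complex.I * (n : ℂ) * (θ : ℂ)))]
      simp
    rw [← hGF.tsum_eq,
      ← Summable.tsum_add_tsum_compl (s := ({0} : Set ℤ)) (hsum.subtype _) (hsum.subtype _), h1]
    rfl
end

section
/- Bound on artifacts for equally spaced antennas: if θ_n = 2π(n−1)/N, then |(1/N) Σ_{n=1}^N e^{i x cos(θ_n−φ)} − J₀(x)| ≤ 2 Σ_{m=1}^∞ |J_{mN}(x)|, and in particular for fixed x this bound tends to 0 as N → ∞. -/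
open Complex Finset Filter

namespace Artifact

/-! ### The coefficients of the Jacobi–Anger double series -/

noncomputable def c (x : ℝ) (k j : ℕ) : ℂ :=
  (k.choose j : ℂ) * (Complex.I * x) ^ k / ((k.factorial : ℂ) * 2 ^ k)

noncomputable def cB (x : ℝ) (k j : ℕ) : ℝ :=
  (k.choose j : ℝ) * x ^ k / ((k.factorial : ℝ) * 2 ^ k)

lemma cB_nonneg {x : ℝ} (hx : 0 ≤ x) (k j : ℕ) : 0 ≤ cB x k j := by
  unfold cB; positivity

lemma norm_c {x : ℝ} (hx : 0 ≤ x) (k j : ℕ) : ‖c x k j‖ = cB x k j := by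
  unfold c cB
  rw [norm_div, norm_mul, norm_pow, norm_mul]
  simp [Complex.norm_natCast, Complex.norm_real, Real.norm_eq_abs, _root_.abs_of_nonneg hx,
    Complex.norm_ofNat]

lemma c_eq_zero {x : ℝ} {k j : ℕ} (h : k < j) : c x k j = 0 := by
  simp [c, Nat.choose_eq_zero_of_lt h]

lemma cB_summable_fixed (x : ℝ) (k : ℕ) : Summable (fun j => cB x k j) := by
  apply summable_of_ne_finset_zero (s := Finset.range (k + 1))
  intro j hj
  simp only [Finset.mem_range, not_lt] at hj
  have h0 : k.choose j = 0 := Nat.choose_eq_zero_of_lt (by omega)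
  simp [cB, h0]

lemma cB_tsum_fixed {x : ℝ} (k : ℕ) : ∑' j, cB x k j = x ^ k / k.factorial := by
  rw [tsum_eq_sum (s := Finset.range (k + 1)) (by
    intro j hj
    simp only [Finset.mem_range, not_lt] at hj
    have h0 : k.choose j = 0 := Nat.choose_eq_zero_of_lt (by omega)
    simp [cB, h0])]
  unfold cB
  rw [← Finset.sum_div, ← Finset.sum_mul, ← Nat.cast_sum, Nat.sum_range_choose]
  have h2 : (0:ℝ) < 2 ^ k := by positivity
  have hf : (0:ℝ) < (k.factorial : ℝ) := by exact_mod_cast k.factorial_pos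
  field_simp
  push_cast; ring

lemma cB_summable {x : ℝ} (hx : 0 ≤ x) : Summable (fun p : ℕ × ℕ => cB x p.1 p.2) := by
  rw [summable_prod_of_nonneg (fun p => cB_nonneg hx p.1 p.2)]
  refine ⟨fun k => cB_summable_fixed x k, ?_⟩
  simp only [cB_tsum_fixed]
  exact Real.summable_pow_div_factorial x

/-! ### The terms of the Bessel series and basic bounds -/

lemma real_exp_tsum (y : ℝ) : ∑' m : ℕ, y ^ m / m.factorial = Real.exp y := by
  rw [Real.exp_eq_exp_ℝ, NormedSpace.exp_eq_tsum_div]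

/-- the term of the `Jnat` series -/
noncomputable def t (x : ℝ) (n m : ℕ) : ℝ :=
  ((-1 : ℝ) ^ m / (m.factorial * (m + n).factorial)) * (x / 2) ^ (2 * m + n)

lemma Jnat_eq_tsum_t (x : ℝ) (n : ℕ) : Jnat n x = ∑' m, t x n m := rfl

lemma abs_t {x : ℝ} (hx : 0 ≤ x) (n m : ℕ) :
    |t x n m| = (x / 2) ^ (2 * m + n) / (m.factorial * (m + n).factorial) := by
  unfold t
  rw [abs_mul, abs_div, _root_.abs_pow, _root_.abs_pow, abs_neg, abs_one, one_pow]
  rw [_root_.abs_of_nonneg (by positivity : (0:ℝ) ≤ x / 2)]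
  rw [_root_.abs_of_nonneg (by positivity : (0:ℝ) ≤ (m.factorial : ℝ) * (m + n).factorial)]
  ring

lemma abs_t_le {x : ℝ} (hx : 0 ≤ x) (n m : ℕ) :
    |t x n m| ≤ (x / 2) ^ n / n.factorial * (((x / 2) ^ 2) ^ m / m.factorial) := by
  rw [abs_t hx]
  have hfle' : (n.factorial * m.factorial : ℝ) ≤ (m.factorial * (m + n).factorial : ℝ) := by
    have : n.factorial ≤ (m + n).factorial := Nat.factorial_le (by omega)
    calc (n.factorial * m.factorial : ℝ) = (m.factorial : ℝ) * n.factorial := by ring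
    _ ≤ (m.factorial : ℝ) * (m + n).factorial := by
        exact_mod_cast Nat.mul_le_mul_left _ this
  have hnum : (x / 2) ^ (2 * m + n) = (x / 2) ^ n * ((x / 2) ^ 2) ^ m := by
    rw [← pow_mul, ← pow_add]; ring_nf
  rw [hnum, div_mul_div_comm]
  rw [← hnum]
  exact div_le_div_of_nonneg_left (by positivity) (by positivity) hfle'

lemma t_summable {x : ℝ} (hx : 0 ≤ x) (n : ℕ) : Summable (t x n) := by
  apply Summable.of_abs
  apply Summable.of_nonneg_of_le (fun m => abs_nonneg _) (abs_t_le hx n)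
  exact ((Real.summable_pow_div_factorial ((x/2)^2)).mul_left _)

lemma abs_Jnat_le {x : ℝ} (hx : 0 ≤ x) (n : ℕ) :
    |Jnat n x| ≤ (x / 2) ^ n / n.factorial * Real.exp ((x / 2) ^ 2) := by
  have hs : Summable fun m => |t x n m| := (t_summable hx n).abs
  have h1 : |Jnat n x| ≤ ∑' m, |t x n m| := by
    rw [Jnat]
    have h := norm_tsum_le_tsum_norm (f := t x n)
      (by simp only [Real.norm_eq_abs]; exact (t_summable hx n).abs)
    simp only [Real.norm_eq_abs, t] at h
    exact h
  refine h1.trans ?_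
  have h2 : ∑' m, |t x n m| ≤ ∑' m, (x / 2) ^ n / n.factorial * (((x / 2) ^ 2) ^ m / m.factorial) :=
    Summable.tsum_le_tsum (abs_t_le hx n) hs ((Real.summable_pow_div_factorial ((x/2)^2)).mul_left _)
  refine h2.trans_eq ?_
  rw [tsum_mul_left, real_exp_tsum]

lemma J_natCast (n : ℕ) (x : ℝ) : J (n : ℤ) x = Jnat n x := by
  simp [J]

/-! ### Evaluating the coefficients on the diagonals -/

lemma c_eval (x : ℝ) (s l : ℕ) :
    c x (2 * l + s) (l + s) = Complex.I ^ s * ((t x s l : ℝ) : ℂ) := by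
  have hle : l + s ≤ 2 * l + s := by omega
  have hsub : 2 * l + s - (l + s) = l := by omega
  have hb : ((2 * l + s).choose (l + s) : ℂ) * (l + s).factorial * l.factorial
      = ((2 * l + s).factorial : ℂ) := by
    have := Nat.choose_mul_factorial_mul_factorial hle (n := 2 * l + s)
    rw [hsub] at this
    exact_mod_cast congrArg (Nat.cast : ℕ → ℂ) this
  have hI : (Complex.I * (x:ℂ)) ^ (2 * l + s) =
      (-1 : ℂ) ^ l * Complex.I ^ s * (x:ℂ) ^ (2 * l + s) := by
    rw [mul_pow]
    congr 1
    rw [pow_add, pow_mul, Complex.I_sq]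
  unfold c t
  rw [hI]
  push_cast
  have h2 : ((2:ℂ)) ^ (2 * l + s) ≠ 0 := by norm_num
  have hf1 : ((2 * l + s).factorial : ℂ) ≠ 0 := by exact_mod_cast Nat.factorial_ne_zero _
  have hf2 : ((l + s).factorial : ℂ) ≠ 0 := by exact_mod_cast Nat.factorial_ne_zero _
  have hf3 : ((l).factorial : ℂ) ≠ 0 := by exact_mod_cast Nat.factorial_ne_zero _
  field_simp
  rw [div_pow, mul_div_assoc', mul_right_comm ((2 * l + s).factorial : ℂ), mul_div_cancel_right₀ _ h2]
  linear_combination (x:ℂ) ^ (2 * l + s) * hb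

lemma c_eval' (x : ℝ) (s l : ℕ) :
    c x (2 * l + s) l = Complex.I ^ s * ((t x s l : ℝ) : ℂ) := by
  rw [← c_eval x s l]
  unfold c
  congr 2
  have h := Nat.choose_symm (show l + s ≤ 2 * l + s by omega) (n := 2 * l + s)
  rw [show 2 * l + s - (l + s) = l by omega] at h
  exact_mod_cast h

/-! ### The double series for `exp (I x cos α)` -/

def sInt (p : ℕ × ℕ) : ℤ := 2 * (p.2 : ℤ) - (p.1 : ℤ)

noncomputable def F (x α : ℝ) (p : ℕ × ℕ) : ℂ :=
  c x p.1 p.2 * Complex.exp (Complex.I * α * ((sInt p : ℤ) : ℂ))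

lemma norm_exp_of_re_eq_zero {z : ℂ} (hz : z.re = 0) : ‖Complex.exp z‖ = 1 := by
  rw [Complex.norm_exp, hz, Real.exp_zero]

lemma norm_exp_phase (α : ℝ) (s : ℤ) : ‖Complex.exp (Complex.I * α * (s : ℂ))‖ = 1 := by
  apply norm_exp_of_re_eq_zero
  simp [Complex.mul_re, Complex.mul_im]

lemma norm_F {x : ℝ} (hx : 0 ≤ x) (α : ℝ) (p : ℕ × ℕ) : ‖F x α p‖ = cB x p.1 p.2 := by
  unfold F
  rw [norm_mul, norm_exp_phase, mul_one, norm_c hx]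

lemma F_summable {x : ℝ} (hx : 0 ≤ x) (α : ℝ) : Summable (F x α) := by
  apply Summable.of_norm
  simp only [norm_F hx α]
  exact cB_summable hx

/-- key per-`k` identity -/
lemma F_row_sum (x α : ℝ) (k : ℕ) :
    ∑ j ∈ Finset.range (k + 1), F x α (k, j)
      = (Complex.I * x * Real.cos α) ^ k / k.factorial := by
  have hcos : (Real.cos α : ℂ) =
      (Complex.exp (Complex.I * α) + Complex.exp (-(Complex.I * α))) / 2 := by
    rw [Complex.ofReal_cos, Complex.cos]
    ring_nf
  have hpow : (Complex.I * x * Real.cos α) ^ k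
      = (Complex.I * x / 2) ^ k *
        (Complex.exp (Complex.I * α) + Complex.exp (-(Complex.I * α))) ^ k := by
    rw [← mul_pow, hcos]; ring_nf
  rw [hpow, add_pow, Finset.mul_sum, Finset.sum_div]
  apply Finset.sum_congr rfl
  intro j hj
  have hjk : j ≤ k := Nat.lt_succ_iff.mp (Finset.mem_range.mp hj)
  have he1 : Complex.exp (Complex.I * α) ^ j = Complex.exp ((j : ℂ) * (Complex.I * α)) := by
    rw [Complex.exp_nat_mul]
  have he2 : Complex.exp (-(Complex.I * α)) ^ (k - j)
      = Complex.exp (-(((k - j : ℕ) : ℂ)) * (Complex.I * α)) := by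
    rw [neg_mul, ← Complex.exp_nat_mul, mul_neg]
  rw [he1, he2, ← Complex.exp_add]
  have harg : (j : ℂ) * (Complex.I * α) + -(((k - j : ℕ) : ℂ)) * (Complex.I * α)
      = Complex.I * α * ((sInt (k, j) : ℤ) : ℂ) := by
    have : (((k - j : ℕ) : ℂ)) = (k : ℂ) - j := by
      push_cast [Nat.cast_sub hjk]; ring
    rw [this]
    unfold sInt
    push_cast
    ring
  rw [harg]
  unfold F c
  field_simp
  rw [mul_assoc (k.choose j : ℂ), ← mul_pow, show (2:ℂ) * (Complex.I * x / 2) = Complex.I * x by ring]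

lemma tsum_F_row {x : ℝ} (hx : 0 ≤ x) (α : ℝ) (k : ℕ) :
    ∑' j, F x α (k, j) = (Complex.I * x * Real.cos α) ^ k / k.factorial := by
  rw [tsum_eq_sum (s := Finset.range (k + 1)) (by
    intro j hj
    have hk : k < j := by simpa using Nat.lt_of_succ_le (not_lt.mp (by simpa using hj))
    unfold F
    rw [c_eq_zero hk, zero_mul])]
  exact F_row_sum x α k

lemma exp_eq_tsum_F {x : ℝ} (hx : 0 ≤ x) (α : ℝ) :
    Complex.exp (Complex.I * x * Real.cos α) = ∑' p : ℕ × ℕ, F x α p := by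
  rw [Summable.tsum_prod' (F_summable hx α)
    (fun k => (F_summable hx α).comp_injective (fun a b hab => by simpa using hab))]
  simp only [tsum_F_row hx α]
  rw [Complex.exp_eq_exp_ℂ, NormedSpace.exp_eq_tsum_div]

/-! ### Averaging over the `N`-th roots of unity -/

lemma sum_exp_eq {N : ℕ} (hN : 1 ≤ N) (s : ℤ) :
    ∑ n : Fin N, Complex.exp (Complex.I * (2 * (Real.pi : ℂ) * ((n : ℕ) : ℂ) / (N : ℂ)) * (s : ℂ))
      = if (N : ℤ) ∣ s then (N : ℂ) else 0 := by
  have hN0 : (N : ℂ) ≠ 0 := Nat.cast_ne_zero.mpr (by omega)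
  set z : ℂ := Complex.I * (2 * Real.pi / N) * s with hz
  have hterm : ∀ n : Fin N,
      Complex.exp (Complex.I * (2 * (Real.pi : ℂ) * ((n : ℕ) : ℂ) / (N : ℂ)) * (s : ℂ))
        = Complex.exp z ^ (n : ℕ) := by
    intro n
    rw [← Complex.exp_nat_mul]
    congr 1
    rw [hz]
    push_cast
    ring
  simp only [hterm]
  rw [Fin.sum_univ_eq_sum_range (fun n => Complex.exp z ^ n) N]
  by_cases hdvd : (N : ℤ) ∣ s
  · obtain ⟨u, hu⟩ := hdvd
    have hz1 : Complex.exp z = 1 := by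
      have : z = (u : ℂ) * (2 * Real.pi * Complex.I) := by
        rw [hz, hu]
        push_cast
        field_simp
      rw [this, Complex.exp_int_mul_two_pi_mul_I]
    rw [if_pos ⟨u, hu⟩]
    simp [hz1]
  · rw [if_neg hdvd]
    have hzN : Complex.exp z ^ N = 1 := by
      rw [← Complex.exp_nat_mul]
      have : (N : ℂ) * z = (s : ℂ) * (2 * Real.pi * Complex.I) := by
        rw [hz]; field_simp
      rw [this, Complex.exp_int_mul_two_pi_mul_I]
    have hNz : (N : ℂ) * z = (s : ℂ) * (2 * Real.pi * Complex.I) := by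
      rw [hz]; field_simp
    have hz1 : Complex.exp z ≠ 1 := by
      intro h
      obtain ⟨u, hu⟩ := Complex.exp_eq_one_iff.mp h
      apply hdvd
      have h2 : (2 * (Real.pi : ℂ) * Complex.I) ≠ 0 := by
        simp [Complex.I_ne_zero, Real.pi_ne_zero, Complex.ofReal_ne_zero]
      have hcast : (s : ℂ) = (N : ℂ) * u := by
        have h3 : (s : ℂ) * (2 * Real.pi * Complex.I)
            = ((N : ℂ) * u) * (2 * Real.pi * Complex.I) := by
          rw [← hNz, hu]; ring
        exact mul_right_cancel₀ h2 h3
      have : s = (N : ℤ) * u := by exact_mod_cast hcast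
      exact ⟨u, this⟩
    rw [geom_sum_eq hz1, hzN]
    simp

/-! ### The averaged series -/

noncomputable def g (x φ : ℝ) (N : ℕ) (p : ℕ × ℕ) : ℂ :=
  if (N : ℤ) ∣ sInt p then
    c x p.1 p.2 * Complex.exp (-(Complex.I * φ * ((sInt p : ℤ) : ℂ))) else 0

noncomputable def g0 (x : ℝ) (p : ℕ × ℕ) : ℂ :=
  if sInt p = 0 then c x p.1 p.2 else 0

noncomputable def gerr (x φ : ℝ) (N : ℕ) (p : ℕ × ℕ) : ℂ :=
  if (N : ℤ) ∣ sInt p ∧ sInt p ≠ 0 then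
    c x p.1 p.2 * Complex.exp (-(Complex.I * φ * ((sInt p : ℤ) : ℂ))) else 0

lemma norm_neg_phase (φ : ℝ) (s : ℤ) : ‖Complex.exp (-(Complex.I * φ * (s : ℂ)))‖ = 1 := by
  apply norm_exp_of_re_eq_zero
  simp [Complex.mul_re, Complex.mul_im]

lemma norm_g_le {x : ℝ} (hx : 0 ≤ x) (φ : ℝ) (N : ℕ) (p : ℕ × ℕ) :
    ‖g x φ N p‖ ≤ cB x p.1 p.2 := by
  unfold g
  split
  · rw [norm_mul, norm_neg_phase, mul_one, norm_c hx]
  · simpa using cB_nonneg hx p.1 p.2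

lemma norm_g0_le {x : ℝ} (hx : 0 ≤ x) (p : ℕ × ℕ) : ‖g0 x p‖ ≤ cB x p.1 p.2 := by
  unfold g0
  split
  · rw [norm_c hx]
  · simpa using cB_nonneg hx p.1 p.2

lemma norm_gerr_le {x : ℝ} (hx : 0 ≤ x) (φ : ℝ) (N : ℕ) (p : ℕ × ℕ) :
    ‖gerr x φ N p‖ ≤ cB x p.1 p.2 := by
  unfold gerr
  split
  · rw [norm_mul, norm_neg_phase, mul_one, norm_c hx]
  · simpa using cB_nonneg hx p.1 p.2

lemma g_summable {x : ℝ} (hx : 0 ≤ x) (φ : ℝ) (N : ℕ) : Summable (g x φ N) :=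
  Summable.of_norm_bounded (cB_summable hx) (norm_g_le hx φ N)

lemma g0_summable {x : ℝ} (hx : 0 ≤ x) : Summable (g0 x) :=
  Summable.of_norm_bounded (cB_summable hx) (norm_g0_le hx)

lemma gerr_summable {x : ℝ} (hx : 0 ≤ x) (φ : ℝ) (N : ℕ) : Summable (gerr x φ N) :=
  Summable.of_norm_bounded (cB_summable hx) (norm_gerr_le hx φ N)

lemma g_decomp (x φ : ℝ) (N : ℕ) (p : ℕ × ℕ) : g x φ N p = g0 x p + gerr x φ N p := by
  unfold g g0 gerr
  by_cases h0 : sInt p = 0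
  · rw [if_pos (h0 ▸ dvd_zero _), if_pos h0, if_neg (by simp [h0]), h0]
    simp
  · rw [if_neg h0]
    by_cases hd : (N : ℤ) ∣ sInt p
    · rw [if_pos hd, if_pos ⟨hd, h0⟩, zero_add]
    · rw [if_neg hd, if_neg (by tauto), zero_add]

lemma average_eq (x φ : ℝ) (hx : 0 ≤ x) {N : ℕ} (hN : 1 ≤ N) :
    (1 / (N : ℂ)) * (∑ n : Fin N,
        Complex.exp (Complex.I * (x : ℂ) *
          ((Real.cos (2 * Real.pi * ((n : ℕ) : ℝ) / (N : ℝ) - φ) : ℝ) : ℂ)))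
      = ∑' p : ℕ × ℕ, g x φ N p := by
  have hN0 : (N : ℂ) ≠ 0 := Nat.cast_ne_zero.mpr (by omega)
  have hexp : ∀ n : Fin N,
      Complex.exp (Complex.I * (x : ℂ) *
          ((Real.cos (2 * Real.pi * ((n : ℕ) : ℝ) / (N : ℝ) - φ) : ℝ) : ℂ))
        = ∑' p, F x (2 * Real.pi * ((n : ℕ) : ℝ) / (N : ℝ) - φ) p :=
    fun n => exp_eq_tsum_F hx _
  rw [Finset.sum_congr rfl (fun n _ => hexp n)]
  rw [← Summable.tsum_finsetSum (fun (n : Fin N) _ => F_summable hx _)]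
  rw [← tsum_mul_left]
  apply tsum_congr
  intro p
  have hsplit : ∀ n : Fin N, F x (2 * Real.pi * ((n : ℕ) : ℝ) / (N : ℝ) - φ) p
      = (c x p.1 p.2 * Complex.exp (-(Complex.I * φ * ((sInt p : ℤ) : ℂ))))
        * Complex.exp (Complex.I * (2 * (Real.pi : ℂ) * ((n : ℕ) : ℂ) / (N : ℂ)) * ((sInt p : ℤ) : ℂ)) := by
    intro n
    unfold F
    rw [mul_assoc (c x p.1 p.2), ← Complex.exp_add]
    congr 2
    push_cast
    ring
  rw [Finset.sum_congr rfl (fun n _ => hsplit n), ← Finset.mul_sum]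
  rw [sum_exp_eq hN (sInt p)]
  unfold g
  by_cases hd : (N : ℤ) ∣ sInt p
  · rw [if_pos hd, if_pos hd]
    field_simp
  · rw [if_neg hd, if_neg hd]
    simp

/-! ### Identifying the constant term with `J 0` -/

lemma tsum_g0 (x : ℝ) : ∑' p : ℕ × ℕ, g0 x p = ((Jnat 0 x : ℝ) : ℂ) := by
  have he : Function.Injective (fun m : ℕ => ((2 * m, m) : ℕ × ℕ)) := by
    intro a b h
    simpa using (Prod.ext_iff.mp h).2
  have hsupp : Function.support (g0 x) ⊆ Set.range (fun m : ℕ => ((2 * m, m) : ℕ × ℕ)) := by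
    intro p hp
    have h0 : sInt p = 0 := by
      by_contra h
      exact hp (by unfold g0; rw [if_neg h])
    refine ⟨p.2, ?_⟩
    have h1 : p.1 = 2 * p.2 := by
      unfold sInt at h0; omega
    exact Prod.ext (by simp [h1]) rfl
  rw [← Function.Injective.tsum_eq he hsupp]
  have heval : ∀ m : ℕ, g0 x (2 * m, m) = ((t x 0 m : ℝ) : ℂ) := by
    intro m
    unfold g0
    rw [if_pos (by unfold sInt; push_cast; ring)]
    have h := c_eval x 0 m
    simpa using h
  simp only [heval]
  rw [← Complex.ofReal_tsum]
  rw [Jnat_eq_tsum_t]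

/-! ### Reindexing the error terms -/

def Emap (N : ℕ) (q : ℕ × Bool × ℕ) : ℕ × ℕ :=
  (2 * q.2.2 + (q.1 + 1) * N, if q.2.1 then q.2.2 + (q.1 + 1) * N else q.2.2)

lemma sInt_Emap (N : ℕ) (m : ℕ) (b : Bool) (l : ℕ) :
    sInt (Emap N (m, b, l)) = if b then (((m + 1) * N : ℕ) : ℤ) else -(((m + 1) * N : ℕ) : ℤ) := by
  cases b <;> (unfold Emap sInt; push_cast; ring_nf) <;> simp <;> ring

lemma Emap_inj {N : ℕ} (hN : 1 ≤ N) : Function.Injective (Emap N) := by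
  rintro ⟨m, b, l⟩ ⟨m', b', l'⟩ h
  have hS : 0 < (m + 1) * N := by positivity
  have hS' : 0 < (m' + 1) * N := by positivity
  have hmm : ∀ a b : ℕ, (a + 1) * N = (b + 1) * N → a = b := by
    intro a b hab
    have := Nat.eq_of_mul_eq_mul_right (show 0 < N by omega) hab
    omega
  rw [Emap, Emap, Prod.mk.injEq] at h
  obtain ⟨h1, h2⟩ := h
  simp only at h1 h2
  cases b <;> cases b' <;> simp only [Bool.false_eq_true, if_true, if_false, ite_true,
    ite_false, reduceIte] at h2
  · have hl : l = l' := h2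
    have hm : (m + 1) * N = (m' + 1) * N := by omega
    have := hmm m m' hm
    simp_all
  · exfalso; omega
  · exfalso; omega
  · have hm : (m + 1) * N = (m' + 1) * N := by omega
    have hl : l = l' := by omega
    have := hmm m m' hm
    simp_all

lemma gerr_support {x φ : ℝ} {N : ℕ} (hN : 1 ≤ N) :
    Function.support (gerr x φ N) ⊆ Set.range (Emap N) := by
  intro p hp
  have hcond : (N : ℤ) ∣ sInt p ∧ sInt p ≠ 0 := by
    by_contra h
    exact hp (by unfold gerr; rw [if_neg h])
  obtain ⟨⟨u, hu⟩, hne⟩ := hcond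
  have hcne : c x p.1 p.2 ≠ 0 := by
    intro h
    exact hp (by unfold gerr; rw [if_pos ⟨⟨u, hu⟩, hne⟩, h, zero_mul])
  have hjk : p.2 ≤ p.1 := by
    by_contra h
    exact hcne (c_eq_zero (by omega))
  have hs_def : sInt p = 2 * (p.2 : ℤ) - (p.1 : ℤ) := rfl
  rcases lt_trichotomy (sInt p) 0 with hlt | h0 | hgt
  · -- negative: b = false
    have hu_neg : u < 0 := by
      rcases mul_neg_iff.mp (hu ▸ hlt) with ⟨_, h⟩ | ⟨h, _⟩
      · exact h
      · exfalso; exact absurd h (by exact_mod_cast Nat.not_lt.mpr (Nat.zero_le N))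
    refine ⟨((-u).toNat - 1, false, p.2), ?_⟩
    have hm1 : (((((-u).toNat - 1 + 1) * N : ℕ)) : ℤ) = -(sInt p) := by
      have h1 : ((-u).toNat : ℤ) = -u := Int.toNat_of_nonneg (by omega)
      have h2 : (-u).toNat - 1 + 1 = (-u).toNat := by omega
      rw [h2]
      push_cast [h1]
      rw [hu]; ring
    rw [hs_def] at hm1
    unfold Emap
    have hk : 2 * p.2 + ((-u).toNat - 1 + 1) * N = p.1 := by omega
    exact Prod.ext (by simpa using hk) (by simp)
  · exact absurd h0 hne
  · -- positive: b = true
    have hu_pos : 0 < u := by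
      rcases mul_pos_iff.mp (hu ▸ hgt) with ⟨_, h⟩ | ⟨h, _⟩
      · exact h
      · exfalso; exact absurd h (by exact_mod_cast Nat.not_lt.mpr (Nat.zero_le N))
    refine ⟨(u.toNat - 1, true, p.1 - p.2), ?_⟩
    have hm1 : ((((u.toNat - 1 + 1) * N : ℕ)) : ℤ) = sInt p := by
      have h1 : (u.toNat : ℤ) = u := Int.toNat_of_nonneg (by omega)
      have h2 : u.toNat - 1 + 1 = u.toNat := by omega
      rw [h2]
      push_cast [h1]
      rw [hu]; ring
    rw [hs_def] at hm1
    unfold Emap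
    have hgt' : (p.1 : ℤ) < 2 * p.2 := by omega
    have hk : 2 * (p.1 - p.2) + (u.toNat - 1 + 1) * N = p.1 := by omega
    have hj : p.1 - p.2 + (u.toNat - 1 + 1) * N = p.2 := by omega
    exact Prod.ext (by simpa using hk) (by simpa using hj)

noncomputable def phase (φ : ℝ) (S : ℕ) (b : Bool) : ℂ :=
  if b then Complex.exp (-(Complex.I * φ * (S : ℂ))) else Complex.exp (Complex.I * φ * (S : ℂ))

lemma norm_phase (φ : ℝ) (S : ℕ) (b : Bool) : ‖phase φ S b‖ = 1 := by
  cases b <;>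
    (unfold phase; apply norm_exp_of_re_eq_zero; simp [Complex.mul_re, Complex.mul_im])

lemma gerr_Emap {x φ : ℝ} {N : ℕ} (hN : 1 ≤ N) (m : ℕ) (b : Bool) (l : ℕ) :
    gerr x φ N (Emap N (m, b, l))
      = (Complex.I ^ ((m + 1) * N) * phase φ ((m + 1) * N) b) * ((t x ((m + 1) * N) l : ℝ) : ℂ) := by
  have hSpos : 0 < (m + 1) * N := by positivity
  have hdvd' : (N : ℤ) ∣ (((m + 1) * N : ℕ) : ℤ) := ⟨(m + 1 : ℤ), by push_cast; ring⟩
  have hne' : (((m + 1) * N : ℕ) : ℤ) ≠ 0 := by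
    simp only [ne_eq, Int.natCast_eq_zero]
    omega
  cases b
  · have hs : sInt (Emap N (m, false, l)) = -(((m + 1) * N : ℕ) : ℤ) := by
      simpa using sInt_Emap N m false l
    unfold gerr
    rw [if_pos ⟨by rw [hs]; exact (dvd_neg).mpr hdvd', by rw [hs]; simpa using hne'⟩]
    rw [hs]
    have hc : c x (2 * l + (m + 1) * N) l
        = Complex.I ^ ((m + 1) * N) * ((t x ((m + 1) * N) l : ℝ) : ℂ) := c_eval' x _ l
    show c x (2 * l + (m + 1) * N) l * _ = _
    rw [hc]
    have hex : Complex.exp (-(Complex.I * (φ:ℂ) * ((-((((m + 1) * N : ℕ)) : ℤ) : ℤ) : ℂ)))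
        = Complex.exp (Complex.I * (φ:ℂ) * ((((m + 1) * N : ℕ)) : ℂ)) := by
      congr 1
      push_cast
      ring
    rw [hex]
    unfold phase
    simp only [Bool.false_eq_true, if_false]
    ring
  · have hs : sInt (Emap N (m, true, l)) = (((m + 1) * N : ℕ) : ℤ) := by
      simpa using sInt_Emap N m true l
    unfold gerr
    rw [if_pos ⟨by rw [hs]; exact hdvd', by rw [hs]; exact hne'⟩]
    rw [hs]
    have hc : c x (2 * l + (m + 1) * N) (l + (m + 1) * N)
        = Complex.I ^ ((m + 1) * N) * ((t x ((m + 1) * N) l : ℝ) : ℂ) := c_eval x _ l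
    show c x (2 * l + (m + 1) * N) (l + (m + 1) * N) * _ = _
    rw [hc]
    have hex : Complex.exp (-(Complex.I * (φ:ℂ) * ((((((m + 1) * N : ℕ)) : ℤ)) : ℂ)))
        = Complex.exp (-(Complex.I * (φ:ℂ) * ((((m + 1) * N : ℕ)) : ℂ))) := by
      norm_cast
    rw [hex]
    unfold phase
    simp only [if_true]
    ring

lemma tsum_gerr_row {x φ : ℝ} (hx : 0 ≤ x) {N : ℕ} (hN : 1 ≤ N) (m : ℕ) (b : Bool) :
    ∑' l, gerr x φ N (Emap N (m, b, l))
      = (Complex.I ^ ((m + 1) * N) * phase φ ((m + 1) * N) b) * ((Jnat ((m + 1) * N) x : ℝ) : ℂ) := by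
  simp only [gerr_Emap hN m b]
  rw [tsum_mul_left, Jnat_eq_tsum_t, Complex.ofReal_tsum]

lemma norm_gerr_row {x φ : ℝ} (hx : 0 ≤ x) {N : ℕ} (hN : 1 ≤ N) (m : ℕ) (b : Bool) :
    ‖∑' l, gerr x φ N (Emap N (m, b, l))‖ = |Jnat ((m + 1) * N) x| := by
  rw [tsum_gerr_row hx hN m b, norm_mul, norm_mul, norm_pow, Complex.norm_I, one_pow,
    norm_phase, Complex.norm_real, Real.norm_eq_abs]
  ring

end Artifact

/-- Bound on the artifact for equally spaced antennas `θ_n = 2π(n−1)/N`: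
`|(1/N) Σ_n e^{ix cos(θ_n−φ)} − J₀(x)| ≤ 2 Σ_{m≥1} |J_{mN}(x)|`, and for fixed
`x` this bound tends to `0` as `N → ∞`. -/
theorem artifact_bound_equally_spaced (x φ : ℝ) (hx : 0 ≤ x) :
    (∀ N : ℕ, 1 ≤ N →
      ‖(1 / (N : ℂ)) * (∑ n : Fin N,
          Complex.exp (Complex.I * (x : ℂ) *
            ((Real.cos (2 * Real.pi * ((n : ℕ) : ℝ) / (N : ℝ) - φ) : ℝ) : ℂ))) -
        (J 0 x : ℂ)‖ ≤ 2 * ∑' m : ℕ, |J (((m + 1) * N : ℕ) : ℤ) x|) ∧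
    Tendsto (fun N : ℕ => 2 * ∑' m : ℕ, |J (((m + 1) * N : ℕ) : ℤ) x|)
      atTop (nhds 0) := by
  classical
  have hC : (0:ℝ) ≤ Real.exp ((x / 2) ^ 2) := (Real.exp_pos _).le
  constructor
  · intro N hN
    have hNpos : 0 < N := hN
    have hinj : Function.Injective (fun m : ℕ => (m + 1) * N) := by
      intro a b hab
      have := Nat.eq_of_mul_eq_mul_right hNpos hab
      omega
    have hbase : Summable (fun m : ℕ => (x / 2) ^ ((m + 1) * N) / (((m + 1) * N).factorial : ℝ)) := by
      have := (Real.summable_pow_div_factorial (x / 2)).comp_injective hinj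
      simpa [Function.comp_def] using this
    have hJb : ∀ m : ℕ, |Jnat ((m + 1) * N) x|
        ≤ (x / 2) ^ ((m + 1) * N) / (((m + 1) * N).factorial : ℝ) * Real.exp ((x / 2) ^ 2) :=
      fun m => Artifact.abs_Jnat_le hx _
    have hJs : Summable (fun m : ℕ => |Jnat ((m + 1) * N) x|) :=
      Summable.of_nonneg_of_le (fun m => abs_nonneg _) hJb (hbase.mul_right _)
    have hEsum : Summable (fun q : ℕ × Bool × ℕ => Artifact.gerr x φ N (Artifact.Emap N q)) :=
      (Artifact.gerr_summable hx φ N).comp_injective (Artifact.Emap_inj hN)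
    have hrow : ∀ (m : ℕ) (b : Bool),
        Summable (fun l : ℕ => Artifact.gerr x φ N (Artifact.Emap N (m, b, l))) := by
      intro m b
      have := hEsum.comp_injective (i := fun l : ℕ => ((m, b, l) : ℕ × Bool × ℕ))
        (fun a b hab => by simpa using hab)
      simpa [Function.comp_def] using this
    have hslice : ∀ m : ℕ,
        Summable (fun q : Bool × ℕ => Artifact.gerr x φ N (Artifact.Emap N (m, q))) := by
      intro m
      have := hEsum.comp_injective (i := fun q : Bool × ℕ => ((m, q) : ℕ × Bool × ℕ))
        (fun a b hab => by simpa using hab)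
      simpa [Function.comp_def] using this
    set v : ℕ → ℂ :=
      fun m => ∑' q : Bool × ℕ, Artifact.gerr x φ N (Artifact.Emap N (m, q)) with hv
    have hv_eq : ∀ m : ℕ, v m = (∑' l, Artifact.gerr x φ N (Artifact.Emap N (m, false, l)))
        + (∑' l, Artifact.gerr x φ N (Artifact.Emap N (m, true, l))) := by
      intro m
      rw [show v m = ∑' q : Bool × ℕ, Artifact.gerr x φ N (Artifact.Emap N (m, q)) from rfl]
      rw [Summable.tsum_prod' (hslice m) (fun b => hrow m b), tsum_bool]
    have hv_norm : ∀ m : ℕ, ‖v m‖ ≤ 2 * |Jnat ((m + 1) * N) x| := by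
      intro m
      rw [hv_eq m]
      refine (norm_add_le _ _).trans ?_
      rw [Artifact.norm_gerr_row hx hN m false, Artifact.norm_gerr_row hx hN m true]
      exact le_of_eq (by ring)
    have hv_norm_summable : Summable (fun m => ‖v m‖) :=
      Summable.of_nonneg_of_le (fun m => norm_nonneg _) hv_norm (hJs.mul_left 2)
    have hgerr_tsum : ∑' p : ℕ × ℕ, Artifact.gerr x φ N p = ∑' m, v m := by
      rw [← Function.Injective.tsum_eq (Artifact.Emap_inj hN) (Artifact.gerr_support hN)]
      rw [Summable.tsum_prod' hEsum hslice]
    have hJ0 : J 0 x = Jnat 0 x := by simp [J]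
    have hdecomp : ∑' p : ℕ × ℕ, Artifact.g x φ N p
        = ((Jnat 0 x : ℝ) : ℂ) + ∑' p : ℕ × ℕ, Artifact.gerr x φ N p := by
      rw [tsum_congr (Artifact.g_decomp x φ N)]
      rw [Summable.tsum_add (Artifact.g0_summable hx) (Artifact.gerr_summable hx φ N)]
      rw [Artifact.tsum_g0 x]
    have hLHS : ‖(1 / (N : ℂ)) * (∑ n : Fin N,
          Complex.exp (Complex.I * (x : ℂ) *
            ((Real.cos (2 * Real.pi * ((n : ℕ) : ℝ) / (N : ℝ) - φ) : ℝ) : ℂ))) -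
        (J 0 x : ℂ)‖ = ‖∑' m, v m‖ := by
      rw [Artifact.average_eq x φ hx hN, hdecomp, hJ0, add_sub_cancel_left, hgerr_tsum]
    rw [hLHS]
    have hRHS : (∑' m : ℕ, |J (((m + 1) * N : ℕ) : ℤ) x|)
        = ∑' m : ℕ, |Jnat ((m + 1) * N) x| := by
      apply tsum_congr
      intro m
      rw [Artifact.J_natCast]
    rw [hRHS]
    calc ‖∑' m, v m‖ ≤ ∑' m, ‖v m‖ := norm_tsum_le_tsum_norm hv_norm_summable
    _ ≤ ∑' m, 2 * |Jnat ((m + 1) * N) x| := Summable.tsum_le_tsum hv_norm hv_norm_summable (hJs.mul_left 2)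
    _ = 2 * ∑' m, |Jnat ((m + 1) * N) x| := tsum_mul_left
  · have hrw : (fun N : ℕ => 2 * ∑' m : ℕ, |J (((m + 1) * N : ℕ) : ℤ) x|)
        = fun N : ℕ => 2 * ∑' m : ℕ, |Jnat ((m + 1) * N) x| := by
      funext N
      simp only [Artifact.J_natCast]
    rw [hrw]
    apply squeeze_zero' (g := fun N : ℕ => 2 * Real.exp ((x / 2) ^ 2) *
        ∑' k : ℕ, (x / 2) ^ (k + N) / ((k + N).factorial : ℝ))
    · exact Eventually.of_forall fun N =>
        mul_nonneg (by norm_num) (tsum_nonneg fun m => abs_nonneg _)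
    · filter_upwards [eventually_ge_atTop 1] with N hN
      have hNpos : 0 < N := hN
      have hinj : Function.Injective (fun m : ℕ => (m + 1) * N) := by
        intro a b hab
        have := Nat.eq_of_mul_eq_mul_right hNpos hab
        omega
      have hbase : Summable (fun m : ℕ => (x / 2) ^ ((m + 1) * N) / (((m + 1) * N).factorial : ℝ)) := by
        have := (Real.summable_pow_div_factorial (x / 2)).comp_injective hinj
        simpa [Function.comp_def] using this
      have hJb : ∀ m : ℕ, |Jnat ((m + 1) * N) x|
          ≤ (x / 2) ^ ((m + 1) * N) / (((m + 1) * N).factorial : ℝ) * Real.exp ((x / 2) ^ 2) :=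
        fun m => Artifact.abs_Jnat_le hx _
      have hJs : Summable (fun m : ℕ => |Jnat ((m + 1) * N) x|) :=
        Summable.of_nonneg_of_le (fun m => abs_nonneg _) hJb (hbase.mul_right _)
      have htail : Summable (fun k : ℕ => (x / 2) ^ (k + N) / ((k + N).factorial : ℝ)) := by
        have := (Real.summable_pow_div_factorial (x / 2)).comp_injective
          (add_left_injective N)
        simpa [Function.comp_def] using this
      have h1 : ∑' m : ℕ, |Jnat ((m + 1) * N) x|
          ≤ (∑' m : ℕ, (x / 2) ^ ((m + 1) * N) / (((m + 1) * N).factorial : ℝ))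
            * Real.exp ((x / 2) ^ 2) := by
        calc ∑' m : ℕ, |Jnat ((m + 1) * N) x|
            ≤ ∑' m : ℕ, (x / 2) ^ ((m + 1) * N) / (((m + 1) * N).factorial : ℝ)
              * Real.exp ((x / 2) ^ 2) := Summable.tsum_le_tsum hJb hJs (hbase.mul_right _)
        _ = _ := tsum_mul_right
      have h2 : (∑' m : ℕ, (x / 2) ^ ((m + 1) * N) / (((m + 1) * N).factorial : ℝ))
          ≤ ∑' k : ℕ, (x / 2) ^ (k + N) / ((k + N).factorial : ℝ) := by
        apply Summable.tsum_le_tsum_of_inj (fun m : ℕ => m * N)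
          (fun a b hab => by
            have := Nat.eq_of_mul_eq_mul_right hNpos hab
            omega)
          (fun k _ => by positivity)
          (fun m => le_of_eq (by rw [show m * N + N = (m + 1) * N by ring]))
          hbase htail
      have hS1 : (0:ℝ) ≤ ∑' m : ℕ, (x / 2) ^ ((m + 1) * N) / (((m + 1) * N).factorial : ℝ) :=
        tsum_nonneg fun m => by positivity
      calc 2 * ∑' m : ℕ, |Jnat ((m + 1) * N) x|
          ≤ 2 * ((∑' m : ℕ, (x / 2) ^ ((m + 1) * N) / (((m + 1) * N).factorial : ℝ))
            * Real.exp ((x / 2) ^ 2)) := by linarith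
      _ ≤ 2 * ((∑' k : ℕ, (x / 2) ^ (k + N) / ((k + N).factorial : ℝ))
            * Real.exp ((x / 2) ^ 2)) := by nlinarith
      _ = 2 * Real.exp ((x / 2) ^ 2) * ∑' k : ℕ, (x / 2) ^ (k + N) / ((k + N).factorial : ℝ) := by
            ring
    · have h0 := tendsto_sum_nat_add (f := fun n : ℕ => (x / 2) ^ n / (n.factorial : ℝ))
      have := h0.const_mul (2 * Real.exp ((x / 2) ^ 2))
      simpa using this
end
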